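/- For any m-bit random variable Z, the squared L1 distance of Z from the uniform distribution on m bits is at most the sum over all nonzero S ∈ {0,1}^m of the squared L1 distance of the parity bit S·Z from the uniform distribution on one bit. -/

import Mathlib

open scoped Kronecker ComplexOrder
open Matrix BigOperators

/-- Schatten-1 norm `‖A‖₁ = Tr √(AᴴA)`. -/
noncomputable def trNorm {n m : Type*} [Fintype n] [Fintype m] [DecidableEq m] (A : Matrix n m ℂ) : ℝ :=
  (((Matrix.posSemidef_conjTranspose_mul_self A).1.eigenvectorUnitary.1 *
    diagonal ((fun x : ℝ => (x : ℂ)) ∘ Real.sqrt ∘ (Matrix.posSemidef_conjTranspose_mul_self A).1.eigenvalues) *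
    (star (Matrix.posSemidef_conjTranspose_mul_self A).1.eigenvectorUnitary : Matrix m m ℂ)).trace).re

/-- Trace distance `(1/2)‖A − B‖₁`. -/
noncomputable def trDist {n : Type*} [Fintype n] [DecidableEq n] (A B : Matrix n n ℂ) : ℝ :=
  (1/2) * trNorm (A - B)

/-- `ρ` is a density matrix. -/
def IsDensity {n : Type*} [Fintype n] (ρ : Matrix n n ℂ) : Prop :=
  ρ.PosSemidef ∧ ρ.trace = 1

def eps (b : ZMod 2) : ℝ := if b = 0 then 1 else -1

lemma zmod2_cases : ∀ a : ZMod 2, a = 0 ∨ a = 1 := by decide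

lemma eps_zero : eps 0 = 1 := by simp [eps]
lemma eps_one : eps 1 = -1 := by simp [eps]

lemma eps_add (a b : ZMod 2) : eps (a + b) = eps a * eps b := by
  rcases zmod2_cases a with ha | ha <;> rcases zmod2_cases b with hb | hb <;>
    subst ha <;> subst hb <;>
    simp [eps, show (1 + 1 : ZMod 2) = 0 from by decide,
      show (1 : ZMod 2) ≠ 0 from by decide]

lemma zmod2_sum {M : Type*} [AddCommMonoid M] (g : ZMod 2 → M) : ∑ b, g b = g 0 + g 1 := by
  have h : (Finset.univ : Finset (ZMod 2)) = {0, 1} := by decide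
  rw [h, Finset.sum_insert (by decide), Finset.sum_singleton]

lemma sum_eps_eq_zero {m : ℕ} {u : Fin m → ZMod 2} (hu : u ≠ 0) :
    ∑ z : Fin m → ZMod 2, eps (u ⬝ᵥ z) = 0 := by
  obtain ⟨i, hi⟩ : ∃ i, u i ≠ 0 := by
    by_contra h; push_neg at h; exact hu (funext h)
  have hui : u i = 1 := (zmod2_cases (u i)).resolve_left hi
  set e : Fin m → ZMod 2 := Pi.single i 1 with he
  have key : ∀ z, eps (u ⬝ᵥ (z + e)) = - eps (u ⬝ᵥ z) := by
    intro z
    have h1 : u ⬝ᵥ (z + e) = u ⬝ᵥ z + 1 := by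
      rw [dotProduct_add, he, dotProduct_single, hui, mul_one]
    rw [h1, eps_add, eps_one]; ring
  have h2 : ∑ z : Fin m → ZMod 2, eps (u ⬝ᵥ (z + e)) = ∑ z : Fin m → ZMod 2, eps (u ⬝ᵥ z) :=
    Equiv.sum_comp (Equiv.addRight e) (fun z => eps (u ⬝ᵥ z))
  simp_rw [key] at h2
  rw [Finset.sum_neg_distrib] at h2
  linarith

lemma sum_eps_zero_left {m : ℕ} (u : Fin m → ZMod 2) (h : u = 0) :
    ∑ z : Fin m → ZMod 2, eps (u ⬝ᵥ z) = 2 ^ m := by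
  subst h
  simp [zero_dotProduct, eps_zero, Finset.card_univ, Fintype.card_fun]

lemma vec_add_self {m : ℕ} (z : Fin m → ZMod 2) : z + z = 0 := by
  funext i
  have : ∀ a : ZMod 2, a + a = 0 := by decide
  exact this (z i)

lemma parseval {m : ℕ} (f : (Fin m → ZMod 2) → ℝ) :
    ∑ S : Fin m → ZMod 2, (∑ z, eps (S ⬝ᵥ z) * f z) ^ 2 = 2 ^ m * ∑ z, f z ^ 2 := by
  have expand : ∀ S : Fin m → ZMod 2,
      (∑ z, eps (S ⬝ᵥ z) * f z) ^ 2
        = ∑ z, ∑ w, eps ((z + w) ⬝ᵥ S) * (f z * f w) := by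
    intro S
    rw [sq, Finset.sum_mul_sum]
    refine Finset.sum_congr rfl fun z _ => Finset.sum_congr rfl fun w _ => ?_
    rw [add_dotProduct, eps_add, dotProduct_comm z S, dotProduct_comm w S]
    ring
  simp_rw [expand]
  rw [Finset.sum_comm]
  have step : ∀ z : Fin m → ZMod 2,
      ∑ S : Fin m → ZMod 2, ∑ w, eps ((z + w) ⬝ᵥ S) * (f z * f w)
        = 2 ^ m * f z ^ 2 := by
    intro z
    rw [Finset.sum_comm]
    have hzero : ∀ w ∈ (Finset.univ : Finset (Fin m → ZMod 2)), w ≠ z →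
        ∑ S : Fin m → ZMod 2, eps ((z + w) ⬝ᵥ S) * (f z * f w) = 0 := by
      intro w _ hw
      have hzw : z + w ≠ 0 := by
        intro h
        have h2 : z + (z + w) = z + 0 := by rw [h]
        rw [← add_assoc, vec_add_self, zero_add, add_zero] at h2
        exact hw h2
      rw [← Finset.sum_mul, sum_eps_eq_zero hzw, zero_mul]
    rw [Finset.sum_eq_single_of_mem z (Finset.mem_univ z) hzero, vec_add_self,
      ← Finset.sum_mul, sum_eps_zero_left _ rfl, sq]
  simp_rw [step]
  rw [← Finset.mul_sum]

lemma bracket_eq {P0 P1 G : ℝ} (hsum : P0 + P1 = 1) (hG : G = P0 - P1) :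
    (|P0 - 2⁻¹| + |P1 - 2⁻¹|) ^ 2 = G ^ 2 := by
  have e0 : P0 - 2⁻¹ = G / 2 := by rw [hG]; linarith
  have e1 : P1 - 2⁻¹ = -(G / 2) := by rw [hG]; linarith
  rw [e0, e1, abs_neg]
  have habs : |G / 2| + |G / 2| = |G| := by
    rw [abs_div, abs_two]; ring
  rw [habs, sq_abs]

/-- Vazirani's classical XOR-Lemma. -/
theorem stmt1 (m : ℕ) (p : (Fin m → ZMod 2) → ℝ) (hp : ∀ z, 0 ≤ p z) (hsum : ∑ z, p z = 1) :
    (∑ z, |p z - ((2:ℝ)^m)⁻¹|)^2 ≤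
      ∑ S ∈ Finset.univ.filter (fun S : Fin m → ZMod 2 => S ≠ 0),
        (∑ b : ZMod 2, |(∑ z ∈ Finset.univ.filter (fun z : Fin m → ZMod 2 => S ⬝ᵥ z = b), p z)
            - 2⁻¹|)^2 := by
  classical
  have hcard : (Finset.univ : Finset (Fin m → ZMod 2)).card = 2 ^ m := by
    simp [Finset.card_univ, Fintype.card_fun]
  have hq0 : ∑ z, (p z - ((2:ℝ)^m)⁻¹) = 0 := by
    rw [Finset.sum_sub_distrib, hsum, Finset.sum_const, hcard, nsmul_eq_mul]
    push_cast
    field_simp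
    norm_num
  have hF0 : (∑ z, eps ((0 : Fin m → ZMod 2) ⬝ᵥ z) * (p z - ((2:ℝ)^m)⁻¹)) = 0 := by
    simp only [zero_dotProduct, eps_zero, one_mul]
    exact hq0
  have hPar := parseval (m := m) (fun z => p z - ((2:ℝ)^m)⁻¹)
  have hCS : (∑ z, |p z - ((2:ℝ)^m)⁻¹|) ^ 2 ≤ 2 ^ m * ∑ z, (p z - ((2:ℝ)^m)⁻¹) ^ 2 := by
    have h := sq_sum_le_card_mul_sum_sq
      (s := (Finset.univ : Finset (Fin m → ZMod 2))) (f := fun z => |p z - ((2:ℝ)^m)⁻¹|)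
    simpa [hcard, sq_abs] using h
  have hsplit : ∑ S : Fin m → ZMod 2, (∑ z, eps (S ⬝ᵥ z) * (p z - ((2:ℝ)^m)⁻¹)) ^ 2
      = ∑ S ∈ Finset.univ.filter (fun S : Fin m → ZMod 2 => S ≠ 0),
          (∑ z, eps (S ⬝ᵥ z) * (p z - ((2:ℝ)^m)⁻¹)) ^ 2 := by
    rw [Finset.filter_ne']
    rw [← Finset.sum_erase_add _ _ (Finset.mem_univ (0 : Fin m → ZMod 2)), hF0]
    simp
  have hterm : ∀ S ∈ Finset.univ.filter (fun S : Fin m → ZMod 2 => S ≠ 0),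
      (∑ b : ZMod 2, |(∑ z ∈ Finset.univ.filter (fun z : Fin m → ZMod 2 => S ⬝ᵥ z = b), p z)
          - 2⁻¹|)^2
        = (∑ z, eps (S ⬝ᵥ z) * (p z - ((2:ℝ)^m)⁻¹)) ^ 2 := by
    intro S hS
    have hSne : S ≠ 0 := (Finset.mem_filter.mp hS).2
    have hPsum : (∑ z ∈ Finset.univ.filter (fun z : Fin m → ZMod 2 => S ⬝ᵥ z = 0), p z)
        + (∑ z ∈ Finset.univ.filter (fun z : Fin m → ZMod 2 => S ⬝ᵥ z = 1), p z) = 1 := by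
      have h1 : ∑ b : ZMod 2, ∑ z ∈ Finset.univ.filter (fun z : Fin m → ZMod 2 => S ⬝ᵥ z = b), p z
          = ∑ z, p z :=
        Finset.sum_fiberwise_of_maps_to (fun z _ => Finset.mem_univ _) p
      rw [zmod2_sum] at h1
      rw [h1, hsum]
    have hG : (∑ z, eps (S ⬝ᵥ z) * (p z - ((2:ℝ)^m)⁻¹))
        = (∑ z ∈ Finset.univ.filter (fun z : Fin m → ZMod 2 => S ⬝ᵥ z = 0), p z)
          - (∑ z ∈ Finset.univ.filter (fun z : Fin m → ZMod 2 => S ⬝ᵥ z = 1), p z) := by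
      have h1 : (∑ z, eps (S ⬝ᵥ z) * (p z - ((2:ℝ)^m)⁻¹)) = ∑ z, eps (S ⬝ᵥ z) * p z := by
        simp only [mul_sub, Finset.sum_sub_distrib, ← Finset.sum_mul,
          sum_eps_eq_zero hSne, zero_mul, sub_zero]
      have h2 : ∑ b : ZMod 2, ∑ z ∈ Finset.univ.filter (fun z : Fin m → ZMod 2 => S ⬝ᵥ z = b),
            eps (S ⬝ᵥ z) * p z = ∑ z, eps (S ⬝ᵥ z) * p z :=
        Finset.sum_fiberwise_of_maps_to (fun z _ => Finset.mem_univ _) _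
      have h3 : ∀ b : ZMod 2, ∑ z ∈ Finset.univ.filter (fun z : Fin m → ZMod 2 => S ⬝ᵥ z = b),
            eps (S ⬝ᵥ z) * p z
          = eps b * ∑ z ∈ Finset.univ.filter (fun z : Fin m → ZMod 2 => S ⬝ᵥ z = b), p z := by
        intro b
        rw [Finset.mul_sum]
        refine Finset.sum_congr rfl fun z hz => ?_
        rw [(Finset.mem_filter.mp hz).2]
      simp only [h3] at h2
      rw [zmod2_sum, eps_zero, eps_one] at h2
      rw [h1, ← h2]
      ring
    rw [zmod2_sum]
    exact bracket_eq hPsum hG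
  calc (∑ z, |p z - ((2:ℝ)^m)⁻¹|)^2
      ≤ 2 ^ m * ∑ z, (p z - ((2:ℝ)^m)⁻¹) ^ 2 := hCS
    _ = ∑ S : Fin m → ZMod 2, (∑ z, eps (S ⬝ᵥ z) * (p z - ((2:ℝ)^m)⁻¹)) ^ 2 := hPar.symm
    _ = ∑ S ∈ Finset.univ.filter (fun S : Fin m → ZMod 2 => S ≠ 0),
          (∑ z, eps (S ⬝ᵥ z) * (p z - ((2:ℝ)^m)⁻¹)) ^ 2 := hsplit
    _ = _ := (Finset.sum_congr rfl hterm).symm
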